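/- Let f : ℝ → ℝ be C^∞ and let a ≤ b be real numbers. Suppose that for every c ∈ [a,b] there exists k ∈ ℕ with f^{(k)}(c) ≠ 0 (i.e., the Taylor series of f at c is nonzero). Then the set {x ∈ [a,b] : f(x) = 0} is finite. -/

import Mathlib

private lemma zero_at_cluster {g : ℝ → ℝ} {c : ℝ} (hg : ContinuousAt g c)
    (h : ∀ ε > (0:ℝ), ∃ x, |x - c| < ε ∧ g x = 0) : g c = 0 := by
  by_contra hne
  obtain ⟨δ, hδ, hδ'⟩ := Metric.continuousAt_iff.mp hg (|g c|) (abs_pos.mpr hne)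
  obtain ⟨x, hx, hx0⟩ := h δ hδ
  have := hδ' (by simpa [Real.dist_eq] using hx)
  rw [Real.dist_eq, hx0] at this
  simp [abs_sub_comm] at this

private lemma rolle_step {g : ℝ → ℝ} {c : ℝ} (hg : Continuous g) (hgc : g c = 0)
    (h : ∀ ε > (0:ℝ), ∃ x, x ≠ c ∧ |x - c| < ε ∧ g x = 0) :
    ∀ ε > (0:ℝ), ∃ x, x ≠ c ∧ |x - c| < ε ∧ deriv g x = 0 := by
  intro ε hε
  obtain ⟨x, hxc, hxε, hx0⟩ := h ε hε
  rcases hxc.lt_or_gt with hlt | hlt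
  · obtain ⟨y, hy, hy0⟩ := exists_deriv_eq_zero hlt hg.continuousOn (hx0.trans hgc.symm)
    refine ⟨y, hy.2.ne, ?_, hy0⟩
    rw [abs_sub_lt_iff] at hxε ⊢
    constructor <;> nlinarith [hy.1, hy.2, hxε.1, hxε.2]
  · obtain ⟨y, hy, hy0⟩ := exists_deriv_eq_zero hlt hg.continuousOn (hgc.trans hx0.symm)
    refine ⟨y, hy.1.ne', ?_, hy0⟩
    rw [abs_sub_lt_iff] at hxε ⊢
    constructor <;> nlinarith [hy.1, hy.2, hxε.1, hxε.2]

/-- **Finiteness of zeros under nonvanishing Taylor series.**  Let `f : ℝ → ℝ` be `C^∞` and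
`a ≤ b`.  If for every `c ∈ [a,b]` some iterated derivative `f^{(k)}(c)` is nonzero, then
`{x ∈ [a,b] : f(x) = 0}` is finite. -/
theorem stmt13 (f : ℝ → ℝ) (hf : ContDiff ℝ (⊤ : ℕ∞) f) (a b : ℝ) (hab : a ≤ b)
    (h : ∀ c ∈ Set.Icc a b, ∃ k : ℕ, iteratedDeriv k f c ≠ 0) :
    {x ∈ Set.Icc a b | f x = 0}.Finite := by
  by_contra hinf
  have hinf' : {x ∈ Set.Icc a b | f x = 0}.Infinite := hinf
  obtain ⟨c, hc, hacc⟩ := hinf'.exists_accPt_of_subset_isCompact isCompact_Icc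
    (fun x hx => hx.1)
  -- extract: zeros of f accumulate at c
  have hP0 : ∀ ε > (0:ℝ), ∃ x, x ≠ c ∧ |x - c| < ε ∧ f x = 0 := by
    intro ε hε
    have := (accPt_iff_nhds.mp hacc) (Metric.ball c ε) (Metric.ball_mem_nhds c hε)
    obtain ⟨x, ⟨hxb, hxS⟩, hxc⟩ := this
    exact ⟨x, hxc, by simpa [Real.dist_eq] using hxb, hxS.2⟩
  have key : ∀ k : ℕ, ∀ ε > (0:ℝ), ∃ x, x ≠ c ∧ |x - c| < ε ∧ iteratedDeriv k f x = 0 := by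
    intro k
    induction k with
    | zero => simpa using hP0
    | succ n ih =>
      have hcont : Continuous (iteratedDeriv n f) :=
        hf.continuous_iteratedDeriv n (by exact_mod_cast le_top)
      have hc0 : iteratedDeriv n f c = 0 :=
        zero_at_cluster hcont.continuousAt
          (fun ε hε => (ih ε hε).imp fun x ⟨_, h1, h2⟩ => ⟨h1, h2⟩)
      have := rolle_step hcont hc0 ih
      simpa [iteratedDeriv_succ] using this
  obtain ⟨k, hk⟩ := h c hc
  exact hk (zero_at_cluster ((hf.continuous_iteratedDeriv k (by exact_mod_cast le_top)).continuousAt)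
    (fun ε hε => (key k ε hε).imp fun x ⟨_, h1, h2⟩ => ⟨h1, h2⟩))
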